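/- Let p be a prime and let G be a finite semi-extraspecial p-group with |G : Z(G)| = p^{2a} possessing an automorphism σ of order p^{2a} − 1. Then all elements of G outside Z(G) have the same order: for all x, y ∈ G with x ∉ Z(G) and y ∉ Z(G), the order of x equals the order of y. -/

import Mathlib

/-- A finite `p`-group `G` is extraspecial if `|Z(G)| = p` and `Z(G) = [G,G]`. -/
def IsExtraspecial (p : ℕ) (G : Type*) [Group G] : Prop :=
  Nat.card (Subgroup.center G) = p ∧ Subgroup.center G = commutator G

/-- A finite `p`-group `G` is semi-extraspecial if `G/N` is extraspecial for every
maximal subgroup `N` of the center `Z(G)`. -/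
def IsSemiExtraspecial (p : ℕ) (G : Type*) [Group G] : Prop :=
  ∀ (N : Subgroup G) [N.Normal], N ≤ Subgroup.center G →
    IsCoatom (N.subgroupOf (Subgroup.center G)) →
    IsExtraspecial p (G ⧸ N)

open Polynomial

set_option linter.unusedSectionVars false
set_option linter.unusedVariables false
set_option linter.unnecessarySimpa false

set_option maxHeartbeats 1000000
set_option synthInstance.maxHeartbeats 400000

lemma singer_transitive {p n : ℕ} (hp : p.Prime) (hn : 0 < n)
    {V : Type*} [AddCommGroup V] [Finite V] [Module (ZMod p) V]
    (hcard : Nat.card V = p ^ n)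
    (f : Module.End (ZMod p) V) (hford : orderOf f = p ^ n - 1) :
    ∀ v w : V, v ≠ 0 → w ≠ 0 → ∃ k : ℕ, (f ^ k) v = w := by
  haveI : Fact p.Prime := ⟨hp⟩
  set N := p ^ n - 1 with hN
  have hpn2 : 2 ≤ p ^ n := by
    calc 2 ≤ p := hp.two_le
    _ ≤ p ^ n := Nat.le_self_pow hn.ne' p
  have hN1 : 1 ≤ N := by omega
  have hNadd : N + 1 = p ^ n := by omega
  have hVnontriv : Nontrivial V := by
    rcases subsingleton_or_nontrivial V with hs | hs
    · have : Nat.card V = 1 := Nat.card_of_subsingleton (0 : V)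
      omega
    · exact hs
  have hfpow : f ^ N = 1 := by rw [← hford]; exact pow_orderOf_eq_one f
  haveI : Finite (Module.End (ZMod p) V) :=
    Finite.of_injective _ (DFunLike.coe_injective (F := Module.End (ZMod p) V))
  have hint : IsIntegral (ZMod p) f := IsIntegral.of_finite (ZMod p) f
  have hfinrank : Module.finrank (ZMod p) V = n := by
    haveI : Fintype V := Fintype.ofFinite V
    have := Module.card_eq_pow_finrank (K := ZMod p) (V := V)
    rw [ZMod.card, ← Nat.card_eq_fintype_card, hcard] at this
    exact (Nat.pow_right_injective hp.two_le this.symm)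
  have hdeg : (minpoly (ZMod p) f).natDegree ≤ n := by
    have h1 : minpoly (ZMod p) f ∣ f.charpoly := LinearMap.minpoly_dvd_charpoly f
    have h2 : f.charpoly ≠ 0 := f.charpoly_monic.ne_zero
    calc (minpoly (ZMod p) f).natDegree ≤ f.charpoly.natDegree :=
        Polynomial.natDegree_le_of_dvd h1 h2
      _ = n := by rw [f.charpoly_natDegree, hfinrank]
  -- the subalgebra generated by f
  set A := Algebra.adjoin (ZMod p) {f} with hA
  have hcomm : ∀ a ∈ ({f} : Set (Module.End (ZMod p) V)), ∀ b ∈ ({f} : Set _), a * b = b * a := by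
    rintro a rfl b rfl; rfl
  -- card A ≤ p ^ n
  have hcardA : Nat.card A ≤ p ^ n := by
    have hspan := Submodule.span_range_natDegree_eq_adjoin (minpoly.monic hint)
      (minpoly.aeval (ZMod p) f)
    haveI : Fintype (Module.End (ZMod p) V) := Fintype.ofFinite _
    classical
    have hfr : Module.finrank (ZMod p) A ≤ n := by
      have : Module.finrank (ZMod p) (Subalgebra.toSubmodule A : Submodule (ZMod p) _) ≤ n := by
        rw [← hspan]
        refine le_trans (finrank_span_finset_le_card _) ?_
        calc ((Finset.range (minpoly (ZMod p) f).natDegree).image (f ^ ·)).card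
            ≤ (Finset.range (minpoly (ZMod p) f).natDegree).card := Finset.card_image_le
          _ = (minpoly (ZMod p) f).natDegree := Finset.card_range _
          _ ≤ n := hdeg
      exact this
    haveI : Fintype A := Fintype.ofFinite _
    have := Module.card_eq_pow_finrank (K := ZMod p) (V := A)
    rw [ZMod.card, ← Nat.card_eq_fintype_card] at this
    rw [this]
    exact Nat.pow_le_pow_right hp.pos hfr
  -- τ as element of A
  haveI : Finite A := Subtype.finite
  set τ : A := ⟨f, Algebra.self_mem_adjoin_singleton (ZMod p) f⟩ with hτdef
  have hvalinj : Function.Injective (A.val : A →ₐ[ZMod p] Module.End (ZMod p) V) :=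
    Subtype.val_injective
  have hτcoe : ∀ k : ℕ, ((τ ^ k : A) : Module.End (ZMod p) V) = f ^ k := by
    intro k
    induction k with
    | zero => simp
    | succ k ih => rw [pow_succ, pow_succ, ← ih]; rfl
  have hτord : orderOf τ = N := by
    rw [← hford]
    exact (orderOf_injective (MonoidHomClass.toMonoidHom (A.val : A →ₐ[ZMod p] Module.End (ZMod p) V)) hvalinj τ).symm
  have hτN : τ ^ N = 1 := by rw [← hτord]; exact pow_orderOf_eq_one τ
  have hτmul : τ * τ ^ (N - 1) = 1 := by
    rw [← pow_succ']; rw [show N - 1 + 1 = N by omega]; exact hτN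
  have hτmul' : τ ^ (N - 1) * τ = 1 := by
    rw [← pow_succ]; rw [show N - 1 + 1 = N by omega]; exact hτN
  set u : Aˣ := ⟨τ, τ ^ (N - 1), hτmul, hτmul'⟩ with hudef
  have huord : orderOf u = N := by rw [← orderOf_units (y := u)]; exact hτord
  have hAnontriv : Nontrivial A := by
    refine ⟨⟨0, 1, fun h01 => ?_⟩⟩
    obtain ⟨v0, hv0⟩ := exists_ne (0 : V)
    have : ((0 : A) : Module.End (ZMod p) V) v0 = ((1 : A) : Module.End (ZMod p) V) v0 := by
      rw [h01]
    simp at this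
    exact hv0 this.symm
  -- counting
  haveI : Nonempty Aˣ := ⟨u⟩
  have hNdvd : N ∣ Nat.card Aˣ := by rw [← huord]; exact orderOf_dvd_natCard u
  have hcardUnitsPos : 0 < Nat.card Aˣ := Nat.card_pos
  have hNle : N ≤ Nat.card Aˣ := Nat.le_of_dvd hcardUnitsPos hNdvd
  classical
  haveI : Fintype A := Fintype.ofFinite _
  have hcompl : Nat.card {a : A // a ≠ 0} = Nat.card A - 1 := by
    rw [Nat.card_eq_fintype_card, Nat.card_eq_fintype_card]
    have := Fintype.card_subtype_compl (fun a : A => a = 0)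
    simpa [Fintype.card_subtype_eq (0 : A)] using this
  have hUinj : Function.Injective (fun w : Aˣ => (⟨(w : A), w.ne_zero⟩ : {a : A // a ≠ 0})) := by
    intro w1 w2 h
    exact Units.ext (congrArg Subtype.val h)
  have hUle : Nat.card Aˣ ≤ Nat.card A - 1 := by
    rw [← hcompl]
    exact Nat.card_le_card_of_injective _ hUinj
  have hcardAN : Nat.card A = N + 1 := by
    have h1 : N + 1 ≤ Nat.card A := by omega
    omega
  have hcardU : Nat.card Aˣ = N := by omega
  haveI : Finite {a : A // a ≠ 0} := Subtype.finite
  -- every nonzero element of A is a unit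
  have hall : ∀ a : A, a ≠ 0 → ∃ k : ℕ, ((u ^ k : Aˣ) : A) = a := by
    intro a ha
    have hbij : Function.Bijective (fun w : Aˣ => (⟨(w : A), w.ne_zero⟩ : {a : A // a ≠ 0})) := by
      rw [Nat.bijective_iff_injective_and_card]
      exact ⟨hUinj, by omega⟩
    obtain ⟨w, hw⟩ := hbij.2 ⟨a, ha⟩
    have hw' : (w : A) = a := congrArg Subtype.val hw
    have hztop : Subgroup.zpowers u = ⊤ := by
      apply Subgroup.eq_top_of_card_eq
      rw [Nat.card_zpowers, huord, hcardU]
    have hwz : w ∈ Subgroup.zpowers u := by rw [hztop]; trivial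
    have hfin : IsOfFinOrder u := isOfFinOrder_of_finite u
    obtain ⟨k, hk⟩ := hfin.mem_powers_iff_mem_zpowers.mpr hwz
    have hk' : u ^ k = w := hk
    exact ⟨k, by rw [hk', hw']⟩
  -- evaluation map a ↦ a v is bijective
  intro v w hv hw
  have hevinj : Function.Injective (fun a : A => ((a : Module.End (ZMod p) V)) v) := by
    intro a b hab
    by_contra hne
    obtain ⟨k, hk⟩ := hall (a - b) (sub_ne_zero.mpr hne)
    have h1 : ((a - b : A) : Module.End (ZMod p) V) v = 0 := by
      have hab' : (a : Module.End (ZMod p) V) v = (b : Module.End (ZMod p) V) v := hab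
      rw [AddSubgroupClass.coe_sub, LinearMap.sub_apply, hab', sub_self]
    have h2 : ((((u ^ k)⁻¹ : Aˣ) : A) * (a - b) : A) = 1 := by
      rw [← hk]; exact Units.inv_mul _
    have h3 : v = 0 := by
      have hc := congrArg (fun g : A => (g : Module.End (ZMod p) V) v) h2
      simp only [MulMemClass.coe_mul, Module.End.mul_apply, OneMemClass.coe_one,
        Module.End.one_apply] at hc
      rw [h1, map_zero] at hc
      exact hc.symm
    exact hv h3
  have hcards : Nat.card A = Nat.card V := by rw [hcardAN, hNadd, hcard]
  have hevbij : Function.Bijective (fun a : A => ((a : Module.End (ZMod p) V)) v) := by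
    rw [Nat.bijective_iff_injective_and_card]
    exact ⟨hevinj, hcards⟩
  obtain ⟨a, hav⟩ := hevbij.2 w
  have hav' : (a : Module.End (ZMod p) V) v = w := hav
  have hane : a ≠ 0 := by
    rintro rfl
    rw [show ((0 : A) : Module.End (ZMod p) V) = 0 from rfl] at hav'
    exact hw (by simpa using hav'.symm)
  obtain ⟨k, hk⟩ := hall a hane
  refine ⟨k, ?_⟩
  have h5 : ((u ^ k : Aˣ) : A) = (τ ^ k : A) := Units.val_pow_eq_pow_val u k
  rw [← hav', ← hk, h5]
  rw [hτcoe k]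

open Subgroup
open scoped commutatorElement

section AuxSE

variable {G : Type*} [Group G]

private lemma auxSE_central_comm {z : G} (hz : z ∈ center G) (w : G) : z * w = w * z :=
  (Subgroup.mem_center_iff.mp hz w).symm

private lemma auxSE_normal {N : Subgroup G} (h : N ≤ center G) : N.Normal := by
  constructor
  intro n hn g
  rw [← auxSE_central_comm (h hn) g, mul_assoc, mul_inv_cancel, mul_one]
  exact hn

private lemma auxSE_comm_left {z : G} (hz : z ∈ center G) (a b : G) :
    ⁅a * z, b⁆ = ⁅a, b⁆ := by
  have hzb : z * b * z⁻¹ = b := by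
    rw [auxSE_central_comm hz b, mul_inv_cancel_right]
  rw [commutatorElement_def, commutatorElement_def]
  calc a * z * b * (a * z)⁻¹ * b⁻¹ = a * (z * b * z⁻¹) * a⁻¹ * b⁻¹ := by group
    _ = a * b * a⁻¹ * b⁻¹ := by rw [hzb]

private lemma auxSE_comm_right {z : G} (hz : z ∈ center G) (a b : G) :
    ⁅a, b * z⁆ = ⁅a, b⁆ := by
  have hza : z * a⁻¹ * z⁻¹ = a⁻¹ := by
    rw [auxSE_central_comm hz a⁻¹, mul_inv_cancel_right]
  rw [commutatorElement_def, commutatorElement_def]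
  calc a * (b * z) * a⁻¹ * (b * z)⁻¹ = a * b * (z * a⁻¹ * z⁻¹) * b⁻¹ := by group
    _ = a * b * a⁻¹ * b⁻¹ := by rw [hza]

variable [Finite G]

private lemma auxSE_exists_coatom (L : Subgroup ↥(center G)) (hL : L ≠ ⊤) :
    ∃ N : Subgroup G, N.Normal ∧ N ≤ center G ∧ IsCoatom (N.subgroupOf (center G)) ∧
      ∀ z : ↥(center G), z ∈ L → (z : G) ∈ N := by
  haveI : Finite (Subgroup ↥(center G)) :=
    Finite.of_injective (SetLike.coe : Subgroup ↥(center G) → Set ↥(center G))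
      SetLike.coe_injective
  rcases eq_top_or_exists_le_coatom L with h | ⟨M, hM, hLM⟩
  · exact absurd h hL
  refine ⟨M.map (center G).subtype, auxSE_normal (map_subtype_le M), map_subtype_le M, ?_, ?_⟩
  · have : (M.map (center G).subtype).subgroupOf (center G) = M :=
      comap_map_eq_self_of_injective (center G).subtype_injective M
    rw [this]
    exact hM
  · intro z hz
    exact ⟨z, hLM hz, rfl⟩

end AuxSE

section AuxSE2

variable {p : ℕ} {G : Type*} [Group G] [Finite G]

open Subgroup


private lemma auxSE_center_quot (hp : p.Prime) {N : Subgroup G} [hNn : N.Normal]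
    (hle : N ≤ center G) (hco : IsCoatom (N.subgroupOf (center G)))
    (hes : IsExtraspecial p (G ⧸ N)) :
    Subgroup.center (G ⧸ N) = (center G).map (QuotientGroup.mk' N) := by
  set π := QuotientGroup.mk' N with hπ
  have hle1 : (center G).map π ≤ center (G ⧸ N) := by
    rintro _ ⟨z, hz, rfl⟩
    rw [Subgroup.mem_center_iff]
    intro q
    obtain ⟨g, rfl⟩ := QuotientGroup.mk'_surjective N q
    rw [← map_mul, ← map_mul, auxSE_central_comm hz g]
  have hne : (center G).map π ≠ ⊥ := by
    intro hbot
    rw [Subgroup.map_eq_bot_iff, QuotientGroup.ker_mk'] at hbot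
    have : N.subgroupOf (center G) = ⊤ :=
      Subgroup.subgroupOf_eq_top.mpr hbot
    exact hco.1 this
  have hdvd : Nat.card ((center G).map π) ∣ p := by
    rw [← hes.1]
    exact Subgroup.card_dvd_of_le hle1
  have hcardmap : Nat.card ((center G).map π) = p := by
    rcases (Nat.Prime.eq_one_or_self_of_dvd hp _ hdvd) with h1 | h2
    · exact absurd (Subgroup.card_eq_one.mp h1) hne
    · exact h2
  -- now map π center ≤ center (G⧸N), same card p
  have hsub : ((center G).map π).subgroupOf (center (G ⧸ N)) = ⊤ := by
    apply Subgroup.eq_top_of_card_eq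
    have hcardsub : Nat.card (((center G).map π).subgroupOf (center (G ⧸ N)))
        = Nat.card ((center G).map π) :=
      Nat.card_congr (Subgroup.subgroupOfEquivOfLe hle1).toEquiv
    rw [hcardsub, hcardmap, hes.1]
  exact le_antisymm (Subgroup.subgroupOf_eq_top.mp hsub) hle1

private lemma auxSE_comap_center {N : Subgroup G} [hNn : N.Normal] (hle : N ≤ center G) :
    Subgroup.comap (QuotientGroup.mk' N) ((center G).map (QuotientGroup.mk' N)) = center G := by
  rw [Subgroup.comap_map_eq, QuotientGroup.ker_mk']
  exact sup_eq_left.mpr hle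

private lemma auxSE_commutator_mem (hp : p.Prime) {N : Subgroup G} [hNn : N.Normal]
    (hle : N ≤ center G) (hco : IsCoatom (N.subgroupOf (center G)))
    (hes : IsExtraspecial p (G ⧸ N)) :
    ∀ x g : G, ⁅x, g⁆ ∈ center G := by
  intro x g
  set π := QuotientGroup.mk' N with hπ
  have h1 : π ⁅x, g⁆ ∈ commutator (G ⧸ N) := by
    rw [map_commutatorElement]
    exact Subgroup.commutator_mem_commutator (Subgroup.mem_top _) (Subgroup.mem_top _)
  rw [← hes.2, auxSE_center_quot hp hle hco hes] at h1
  have := auxSE_comap_center hle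
  rw [← this]
  exact h1

private lemma auxSE_mem_center_of_comm (hp : p.Prime) {N : Subgroup G} [hNn : N.Normal]
    (hle : N ≤ center G) (hco : IsCoatom (N.subgroupOf (center G)))
    (hes : IsExtraspecial p (G ⧸ N)) {x : G} (h : ∀ g : G, ⁅g, x⁆ ∈ N) :
    x ∈ center G := by
  set π := QuotientGroup.mk' N with hπ
  have h1 : π x ∈ center (G ⧸ N) := by
    rw [Subgroup.mem_center_iff]
    intro q
    obtain ⟨g, rfl⟩ := QuotientGroup.mk'_surjective N q
    have h2 : π ⁅g, x⁆ = 1 := (QuotientGroup.eq_one_iff _).mpr (h g)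
    rw [map_commutatorElement] at h2
    have h3 := commutatorElement_eq_one_iff_mul_comm.mp h2
    exact h3
  rw [auxSE_center_quot hp hle hco hes] at h1
  rw [← auxSE_comap_center hle]
  exact h1

private lemma auxSE_pow_mem (hp : p.Prime) {N : Subgroup G} [hNn : N.Normal]
    (hle : N ≤ center G) (hco : IsCoatom (N.subgroupOf (center G)))
    (hes : IsExtraspecial p (G ⧸ N)) (x : G) : x ^ p ∈ center G := by
  set π := QuotientGroup.mk' N with hπ
  have h1 : (π x) ^ p ∈ center (G ⧸ N) := by
    rw [Subgroup.mem_center_iff]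
    intro q
    set e := π x with he
    set c := ⁅e, q⁆ with hc
    have hcmem : c ∈ center (G ⧸ N) := by
      rw [hes.2]
      exact Subgroup.commutator_mem_commutator (Subgroup.mem_top _) (Subgroup.mem_top _)
    have hcp : c ^ p = 1 := by
      have : (⟨c, hcmem⟩ : center (G ⧸ N)) ^ p = 1 := by
        rw [← hes.1]
        exact pow_card_eq_one'
      have h5 := congrArg (Subtype.val) this
      simpa using h5
    have hconj : ∀ k : ℕ, e ^ k * q * (e ^ k)⁻¹ = c ^ k * q := by
      intro k
      induction k with
      | zero => simp
      | succ k ih =>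
        have h6 : e ^ (k + 1) * q * (e ^ (k + 1))⁻¹ = e * (e ^ k * q * (e ^ k)⁻¹) * e⁻¹ := by
          rw [pow_succ']
          group
        rw [h6, ih]
        have h7 : e * (c ^ k * q) * e⁻¹ = c ^ k * (e * q * e⁻¹) := by
          have hce := auxSE_central_comm (Subgroup.pow_mem _ hcmem k) e
          calc e * (c ^ k * q) * e⁻¹ = e * c ^ k * q * e⁻¹ := by group
            _ = c ^ k * e * q * e⁻¹ := by rw [hce]
            _ = c ^ k * (e * q * e⁻¹) := by group
        rw [h7]
        have h8 : e * q * e⁻¹ = c * q := by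
          rw [hc, commutatorElement_def]
          group
        rw [h8, pow_succ']
        group
    have h9 := hconj p
    rw [hcp, one_mul] at h9
    calc q * e ^ p = (e ^ p * q * (e ^ p)⁻¹) * e ^ p := by rw [h9]
      _ = e ^ p * q := by group
  rw [auxSE_center_quot hp hle hco hes] at h1
  rw [← auxSE_comap_center hle]
  have : π (x ^ p) ∈ (center G).map π := by rw [map_pow]; exact h1
  exact this

end AuxSE2

section AuxSE3

variable {p : ℕ} {G : Type*} [Group G] [Finite G]

open Subgroup

private lemma auxSE_camina (hp : p.Prime)
    (hses : ∀ (N : Subgroup G) [N.Normal], N ≤ center G →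
      IsCoatom (N.subgroupOf (center G)) → IsExtraspecial p (G ⧸ N))
    (hZnt : Nontrivial ↥(center G))
    {x : G} (hx : x ∉ center G) : ∀ z ∈ center G, ∃ g : G, ⁅g, x⁆ = z := by
  have hbotne : (⊥ : Subgroup ↥(center G)) ≠ ⊤ := by
    intro h
    obtain ⟨w, hw⟩ := exists_ne (1 : ↥(center G))
    exact hw (Subgroup.mem_bot.mp (h ▸ Subgroup.mem_top w))
  obtain ⟨N₀, hN₀n, hN₀le, hN₀co, -⟩ := auxSE_exists_coatom ⊥ hbotne
  haveI := hN₀n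
  have hcm : ∀ a g : G, ⁅a, g⁆ ∈ center G :=
    auxSE_commutator_mem hp hN₀le hN₀co (hses N₀ hN₀le hN₀co)
  have hmul : ∀ a b : G, ⁅a * b, x⁆ = ⁅a, x⁆ * ⁅b, x⁆ := by
    intro a b
    have hbx := hcm b x
    have h1 : ⁅a * b, x⁆ = a * (b * x * b⁻¹) * a⁻¹ * x⁻¹ := by
      rw [commutatorElement_def]; group
    have h2 : b * x * b⁻¹ = ⁅b, x⁆ * x := by rw [commutatorElement_def]; group
    have h3 : ⁅a * b, x⁆ = ⁅b, x⁆ * ⁅a, x⁆ := by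
      rw [h1, h2]
      calc a * (⁅b, x⁆ * x) * a⁻¹ * x⁻¹ = a * ⁅b, x⁆ * x * a⁻¹ * x⁻¹ := by group
        _ = ⁅b, x⁆ * a * x * a⁻¹ * x⁻¹ := by rw [← auxSE_central_comm hbx a]
        _ = ⁅b, x⁆ * ⁅a, x⁆ := by rw [commutatorElement_def]; group
    rw [h3, auxSE_central_comm hbx ⁅a, x⁆]
  set fmap : G →* ↥(center G) :=
    MonoidHom.mk' (fun g => ⟨⁅g, x⁆, hcm g x⟩) (fun a b => Subtype.ext (hmul a b)) with hfmap
  have hrange : fmap.range = ⊤ := by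
    by_contra hne
    obtain ⟨N, hNn, hNle, hNco, hmem⟩ := auxSE_exists_coatom fmap.range hne
    haveI := hNn
    apply hx
    refine auxSE_mem_center_of_comm hp hNle hNco (hses N hNle hNco) ?_
    intro g
    exact hmem (fmap g) ⟨g, rfl⟩
  intro z hz
  have hmemtop : (⟨z, hz⟩ : ↥(center G)) ∈ fmap.range := by
    rw [hrange]; trivial
  obtain ⟨g, hg⟩ := hmemtop
  exact ⟨g, congrArg Subtype.val hg⟩

private lemma auxSE_conj_eq {x z g : G} (hz : z ∈ center G) (hg : ⁅g, x⁆ = z) :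
    g * x * g⁻¹ = x * z := by
  rw [commutatorElement_def] at hg
  have h1 : g * x * g⁻¹ = z * x := by rw [← hg]; group
  rw [h1, auxSE_central_comm hz x]

private lemma auxSE_order_coset (hp : p.Prime)
    (hses : ∀ (N : Subgroup G) [N.Normal], N ≤ center G →
      IsCoatom (N.subgroupOf (center G)) → IsExtraspecial p (G ⧸ N))
    (hZnt : Nontrivial ↥(center G))
    {x z : G} (hx : x ∉ center G) (hz : z ∈ center G) :
    orderOf (x * z) = orderOf x := by
  obtain ⟨g, hg⟩ := auxSE_camina hp hses hZnt hx z hz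
  rw [← auxSE_conj_eq hz hg]
  have h2 := orderOf_injective ((MulAut.conj g) : G ≃* G).toMonoidHom
    (MulAut.conj g).injective x
  simpa [MulAut.conj_apply] using h2

private lemma auxSE_center_exp (hp : p.Prime)
    (hses : ∀ (N : Subgroup G) [N.Normal], N ≤ center G →
      IsCoatom (N.subgroupOf (center G)) → IsExtraspecial p (G ⧸ N))
    (hZnt : Nontrivial ↥(center G))
    {x : G} (hx : x ∉ center G) (hxp : x ^ p ∈ center G) :
    ∀ z ∈ center G, z ^ p = 1 := by
  intro z hz
  obtain ⟨g, hg⟩ := auxSE_camina hp hses hZnt hx z hz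
  have h1 := auxSE_conj_eq hz hg
  have h2 : (g * x * g⁻¹) ^ p = g * x ^ p * g⁻¹ := by
    have := map_pow ((MulAut.conj g) : G ≃* G).toMonoidHom x p
    simpa [MulAut.conj_apply] using this.symm
  have h3 : g * x ^ p * g⁻¹ = x ^ p := by
    rw [← auxSE_central_comm hxp g]
    group
  have h4 : (x * z) ^ p = x ^ p * z ^ p :=
    Commute.mul_pow ((auxSE_central_comm hz x).symm) p
  have h5 : x ^ p * z ^ p = x ^ p * 1 := by
    rw [← h4, ← h1, h2, h3, mul_one]
  exact mul_left_cancel h5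

end AuxSE3

/-- Let `G` be a finite semi-extraspecial `p`-group with `|G : Z(G)| = p^(2a)` possessing
an automorphism of order `p^(2a) - 1`. Then all elements of `G` outside `Z(G)` have the
same order. -/
theorem stmt_15 (p a : ℕ) (hp : p.Prime) (G : Type*) [Group G] [Finite G]
    (hpG : IsPGroup p G) (hses : IsSemiExtraspecial p G)
    (hindex : (Subgroup.center G).index = p ^ (2 * a))
    (σ : MulAut G) (hσ : orderOf σ = p ^ (2 * a) - 1) :
    ∀ x y : G, x ∉ Subgroup.center G → y ∉ Subgroup.center G → orderOf x = orderOf y := by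
  intro x y hx hy
  haveI : Fact p.Prime := ⟨hp⟩
  rcases Nat.eq_zero_or_pos a with rfl | ha
  · exfalso
    apply hx
    have h1 : (Subgroup.center G).index = 1 := by simpa using hindex
    rw [Subgroup.index_eq_one.mp h1]
    trivial
  set N := p ^ (2 * a) - 1 with hNdef
  have h2a : 0 < 2 * a := by omega
  have hpn2 : 2 ≤ p ^ (2 * a) := by
    calc 2 ≤ p := hp.two_le
    _ ≤ p ^ (2 * a) := Nat.le_self_pow (by omega) p
  have hN1 : 1 ≤ N := by omega
  haveI hGnt : Nontrivial G := ⟨⟨x, 1, fun h => hx (h ▸ Subgroup.one_mem _)⟩⟩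
  haveI hZnt : Nontrivial ↥(Subgroup.center G) := hpG.center_nontrivial
  -- structural facts
  have hbotne : (⊥ : Subgroup ↥(center G)) ≠ ⊤ := by
    intro h
    obtain ⟨w, hw⟩ := exists_ne (1 : ↥(center G))
    exact hw (Subgroup.mem_bot.mp (h ▸ Subgroup.mem_top w))
  obtain ⟨N₀, hN₀n, hN₀le, hN₀co, -⟩ := auxSE_exists_coatom (G := G) ⊥ hbotne
  haveI := hN₀n
  have hes₀ := hses N₀ hN₀le hN₀co
  have hcm : ∀ c g : G, ⁅c, g⁆ ∈ center G := auxSE_commutator_mem hp hN₀le hN₀co hes₀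
  have hpowmem : ∀ g : G, g ^ p ∈ center G := auxSE_pow_mem hp hN₀le hN₀co hes₀
  have hexp : ∀ z ∈ center G, z ^ p = 1 :=
    auxSE_center_exp hp hses hZnt hx (hpowmem x)
  -- the quotient as a ZMod p module
  letI instCommQ : CommGroup (G ⧸ center G) :=
    { (inferInstance : Group (G ⧸ center G)) with
      mul_comm := by
        intro q r
        obtain ⟨g, rfl⟩ := QuotientGroup.mk_surjective q
        obtain ⟨h, rfl⟩ := QuotientGroup.mk_surjective r
        show QuotientGroup.mk (g * h) = QuotientGroup.mk (h * g)
        rw [QuotientGroup.eq_iff_div_mem]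
        have hgh : (g * h) / (h * g) = ⁅g, h⁆ := by
          rw [commutatorElement_def, div_eq_mul_inv]
          group
        rw [hgh]
        exact hcm g h }
  haveI instMod : Module (ZMod p) (Additive (G ⧸ center G)) := by
    refine AddCommGroup.zmodModule ?_
    intro v
    have h1 : (Additive.toMul v) ^ p = 1 := by
      obtain ⟨g, hg⟩ := QuotientGroup.mk_surjective (Additive.toMul v)
      rw [← hg, ← QuotientGroup.mk_pow]
      rw [QuotientGroup.eq_one_iff]
      exact hpowmem g
    have h2 : Additive.ofMul ((Additive.toMul v) ^ p) = p • v := ofMul_pow p (Additive.toMul v)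
    rw [h1] at h2
    simpa using h2.symm
  -- the induced endomorphism
  have hcomap : Subgroup.comap σ.toMonoidHom (center G) = center G :=
    Subgroup.Characteristic.fixed (Subgroup.centerCharacteristic) σ
  have hleσ : center G ≤ Subgroup.comap σ.toMonoidHom (center G) := le_of_eq hcomap.symm
  set F : G ⧸ center G →* G ⧸ center G :=
    QuotientGroup.map (center G) (center G) σ.toMonoidHom hleσ with hFdef
  have hFmk : ∀ g : G, F (QuotientGroup.mk g) = QuotientGroup.mk (σ g) := by
    intro g
    exact QuotientGroup.map_mk (center G) (center G) σ.toMonoidHom hleσ g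
  set f : Module.End (ZMod p) (Additive (G ⧸ center G)) :=
    (MonoidHom.toAdditive F).toZModLinearMap p with hfdef
  have happly : ∀ q : G ⧸ center G, f (Additive.ofMul q) = Additive.ofMul (F q) := fun q => rfl
  have hfk : ∀ (k : ℕ) (g : G),
      (f ^ k) (Additive.ofMul (QuotientGroup.mk g))
        = Additive.ofMul (QuotientGroup.mk ((σ ^ k) g)) := by
    intro k
    induction k with
    | zero =>
      intro g
      rw [pow_zero, pow_zero]
      rfl
    | succ k ih =>
      intro g
      rw [pow_succ' f k, pow_succ' σ k]
      rw [Module.End.mul_apply, ih g, happly, hFmk]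
      rfl
  -- order of f
  have hσN : σ ^ N = 1 := by rw [← hσ]; exact pow_orderOf_eq_one σ
  have hfN : f ^ N = 1 := by
    apply LinearMap.ext
    intro v
    obtain ⟨g, hg⟩ := QuotientGroup.mk_surjective (Additive.toMul v)
    have hv : v = Additive.ofMul (QuotientGroup.mk g) := by rw [hg]; rfl
    rw [hv, hfk N g, hσN]
    rfl
  have hffin : IsOfFinOrder f := isOfFinOrder_iff_pow_eq_one.mpr ⟨N, by omega, hfN⟩
  set m := orderOf f with hmdef
  have hmdvd : m ∣ N := orderOf_dvd_of_pow_eq_one hfN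
  have hfm : f ^ m = 1 := pow_orderOf_eq_one f
  have hstep1 : ∀ g : G, (σ ^ m) g * g⁻¹ ∈ center G := by
    intro g
    have h1 : (f ^ m) (Additive.ofMul (QuotientGroup.mk g))
        = Additive.ofMul (QuotientGroup.mk g) := by rw [hfm]; rfl
    rw [hfk m g] at h1
    have h2 : (QuotientGroup.mk ((σ ^ m) g) : G ⧸ center G) = QuotientGroup.mk g :=
      Additive.ofMul.injective h1
    have h3 := QuotientGroup.eq_iff_div_mem.mp h2
    rwa [div_eq_mul_inv] at h3
  have hstep2 : ∀ z ∈ center G, (σ ^ m) z = z := by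
    intro z hz
    obtain ⟨g, hg⟩ := auxSE_camina hp hses hZnt hx z hz
    have hw1 := hstep1 g
    have hw2 := hstep1 x
    have e1 : (σ ^ m) g = g * ((σ ^ m) g * g⁻¹) := by
      rw [← auxSE_central_comm hw1 g]; group
    have e2 : (σ ^ m) x = x * ((σ ^ m) x * x⁻¹) := by
      rw [← auxSE_central_comm hw2 x]; group
    calc (σ ^ m) z = (σ ^ m) ⁅g, x⁆ := by rw [hg]
      _ = ⁅(σ ^ m) g, (σ ^ m) x⁆ := map_commutatorElement _ g x
      _ = ⁅g * ((σ ^ m) g * g⁻¹), x * ((σ ^ m) x * x⁻¹)⁆ := by rw [← e1, ← e2]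
      _ = ⁅g, x * ((σ ^ m) x * x⁻¹)⁆ := auxSE_comm_left hw1 _ _
      _ = ⁅g, x⁆ := auxSE_comm_right hw2 _ _
      _ = z := hg
  have hstep3 : σ ^ (m * p) = 1 := by
    have key : ∀ g : G, (σ ^ (m * p)) g = g := by
      intro g
      have hw := hstep1 g
      set w := (σ ^ m) g * g⁻¹ with hwdef
      have hclaim : ∀ k : ℕ, ((σ ^ m) ^ k) g = w ^ k * g := by
        intro k
        induction k with
        | zero => simp
        | succ k ih =>
          rw [pow_succ' (σ ^ m) k]
          rw [MulAut.mul_apply, ih]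
          rw [map_mul]
          have hwk : (σ ^ m) (w ^ k) = w ^ k := hstep2 (w ^ k) (Subgroup.pow_mem _ hw k)
          rw [hwk]
          have hgw : (σ ^ m) g = w * g := by rw [hwdef]; group
          rw [hgw, ← mul_assoc, ← pow_succ]
      have h4 : (σ ^ (m * p)) g = ((σ ^ m) ^ p) g := by rw [← pow_mul]
      rw [h4, hclaim p, hexp w hw, one_mul]
    ext g
    simpa using key g
  have hNm : N ∣ m := by
    have hNdvd : N ∣ m * p := by
      rw [← hσ]
      exact orderOf_dvd_of_pow_eq_one hstep3
    have hcop : Nat.Coprime N p := by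
      rcases (Nat.coprime_or_dvd_of_prime hp N) with h | h
      · exact h.symm
      · exfalso
        have hps : p ∣ p ^ (2 * a) := dvd_pow_self p (by omega)
        have h1 : p ∣ p ^ (2 * a) - N := Nat.dvd_sub hps h
        have h2 : p ^ (2 * a) - N = 1 := by omega
        rw [h2] at h1
        exact hp.one_lt.ne' (Nat.dvd_one.mp h1)
    exact hcop.dvd_of_dvd_mul_right hNdvd
  have hordf : orderOf f = N := Nat.dvd_antisymm hmdvd hNm
  -- cardinality
  have hcardV : Nat.card (Additive (G ⧸ center G)) = p ^ (2 * a) := by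
    have h1 : Nat.card (Additive (G ⧸ center G)) = Nat.card (G ⧸ center G) :=
      Nat.card_congr (Additive.toMul)
    rw [h1, ← Subgroup.index_eq_card, hindex]
  -- apply transitivity
  have hvx : Additive.ofMul (QuotientGroup.mk x : G ⧸ center G) ≠ 0 := by
    intro h
    apply hx
    have h1 : (QuotientGroup.mk x : G ⧸ center G) = 1 :=
      Additive.ofMul.injective (by rw [h]; rfl)
    exact (QuotientGroup.eq_one_iff x).mp h1
  have hvy : Additive.ofMul (QuotientGroup.mk y : G ⧸ center G) ≠ 0 := by
    intro h
    apply hy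
    have h1 : (QuotientGroup.mk y : G ⧸ center G) = 1 :=
      Additive.ofMul.injective (by rw [h]; rfl)
    exact (QuotientGroup.eq_one_iff y).mp h1
  obtain ⟨k, hk⟩ := singer_transitive hp h2a hcardV f hordf
    (Additive.ofMul (QuotientGroup.mk x)) (Additive.ofMul (QuotientGroup.mk y)) hvx hvy
  rw [hfk k x] at hk
  set x' := (σ ^ k) x with hx'def
  have hmkeq : (QuotientGroup.mk x' : G ⧸ center G) = QuotientGroup.mk y :=
    Additive.ofMul.injective hk
  have hwmem : x' * y⁻¹ ∈ center G := by
    have := QuotientGroup.eq_iff_div_mem.mp hmkeq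
    rwa [div_eq_mul_inv] at this
  have hy' : y ∉ center G := hy
  have hx'mem : x' ∉ center G := by
    intro hmem
    apply hy'
    have h1 : (QuotientGroup.mk x' : G ⧸ center G) = 1 := (QuotientGroup.eq_one_iff x').mpr hmem
    rw [hmkeq] at h1
    exact (QuotientGroup.eq_one_iff y).mp h1
  have hzmem : x'⁻¹ * y ∈ center G := by
    have h1 : y * x'⁻¹ ∈ center G := by
      have := Subgroup.inv_mem _ hwmem
      simpa [mul_inv_rev] using this
    have h2 : x'⁻¹ * y = y * x'⁻¹ := by
      calc x'⁻¹ * y = x'⁻¹ * (y * x'⁻¹) * x' := by group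
        _ = (y * x'⁻¹) * x'⁻¹ * x' := by rw [← auxSE_central_comm h1 x'⁻¹]
        _ = y * x'⁻¹ := by group
    rw [h2]
    exact h1
  have hyeq : y = x' * (x'⁻¹ * y) := by group
  have hordy : orderOf y = orderOf x' := by
    rw [hyeq]
    exact auxSE_order_coset hp hses hZnt hx'mem hzmem
  have hordx' : orderOf x' = orderOf x := by
    have h2 := orderOf_injective ((σ ^ k : MulAut G) : G ≃* G).toMonoidHom
      (σ ^ k : MulAut G).injective x
    exact h2
  rw [← hordx', hordy]
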